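/- Let a, b, c : ℝ → ℝ and let x, x₁, x₂, x₃ : ℝ → ℝ be differentiable functions each satisfying the Riccati equation y'(t) = a(t) + b(t)·y(t) + c(t)·y(t)² for all t ∈ ℝ. Suppose that x₂(t) − x(t) ≠ 0 and x₃(t) − x₁(t) ≠ 0 for every t ∈ ℝ. Then the cross-ratio k(t) := ((x(t) − x₁(t))·(x₃(t) − x₂(t))) / ((x₂(t) − x(t))·(x₃(t) − x₁(t))) is constant, i.e. its derivative is identically zero on ℝ. -/

import Mathlib

/-- The cross-ratio of four solutions of one and the same real Riccati equation
is constant in time. -/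
theorem riccati_crossRatio_constant
    (a b c x x₁ x₂ x₃ : ℝ → ℝ)
    (hx : ∀ t, HasDerivAt x (a t + b t * x t + c t * (x t) ^ 2) t)
    (h₁ : ∀ t, HasDerivAt x₁ (a t + b t * x₁ t + c t * (x₁ t) ^ 2) t)
    (h₂ : ∀ t, HasDerivAt x₂ (a t + b t * x₂ t + c t * (x₂ t) ^ 2) t)
    (h₃ : ∀ t, HasDerivAt x₃ (a t + b t * x₃ t + c t * (x₃ t) ^ 2) t)
    (hd₁ : ∀ t, x₂ t - x t ≠ 0)
    (hd₂ : ∀ t, x₃ t - x₁ t ≠ 0) :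
    ∀ t, deriv (fun t => ((x t - x₁ t) * (x₃ t - x₂ t)) /
      ((x₂ t - x t) * (x₃ t - x₁ t))) t = 0 := by
  intro t
  set s : ℝ := 2 * b t + c t * (x t + x₁ t + x₂ t + x₃ t) with hs
  have hN : HasDerivAt (fun t => (x t - x₁ t) * (x₃ t - x₂ t))
      (((x t - x₁ t) * (x₃ t - x₂ t)) * s) t := by
    have := (((hx t).sub (h₁ t)).mul ((h₃ t).sub (h₂ t)))
    refine this.congr_deriv ?_
    simp only [hs, Pi.sub_apply]; ring
  have hD : HasDerivAt (fun t => (x₂ t - x t) * (x₃ t - x₁ t))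
      (((x₂ t - x t) * (x₃ t - x₁ t)) * s) t := by
    have := (((h₂ t).sub (hx t)).mul ((h₃ t).sub (h₁ t)))
    refine this.congr_deriv ?_
    simp only [hs, Pi.sub_apply]; ring
  have hD0 : (x₂ t - x t) * (x₃ t - x₁ t) ≠ 0 := mul_ne_zero (hd₁ t) (hd₂ t)
  have := (hN.div hD hD0).deriv
  rw [show (fun t => ((x t - x₁ t) * (x₃ t - x₂ t)) / ((x₂ t - x t) * (x₃ t - x₁ t))) = ((fun t => (x t - x₁ t) * (x₃ t - x₂ t)) / fun t => (x₂ t - x t) * (x₃ t - x₁ t)) from rfl, this]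
  field_simp
  ring
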